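/- Let m, n be natural numbers with n ≥ 3^{2^m}, and let v_1, ..., v_n ∈ ℝ^m. Then there exist indices i < j < k such that for every coordinate ℓ ∈ {1, ..., m}, either v_i[ℓ] ≤ v_j[ℓ] ≤ v_k[ℓ] or v_i[ℓ] ≥ v_j[ℓ] ≥ v_k[ℓ]. -/

import Mathlib

open Function Finset

namespace Stmt18Aux

variable {α : Type*} [LinearOrder α]

theorem erdos_szekeres {r s n : ℕ} {f : Fin n → α} (hn : r * s < n) (hf : Injective f) :
    (∃ t : Finset (Fin n), r < #t ∧ StrictMonoOn f ↑t) ∨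
      ∃ t : Finset (Fin n), s < #t ∧ StrictAntiOn f ↑t := by
  let inc_sequences_ending_in : Fin n → Finset (Finset (Fin n)) := fun i =>
    univ.powerset.filter fun t => Finset.max t = i ∧ StrictMonoOn f ↑t
  let dec_sequences_ending_in : Fin n → Finset (Finset (Fin n)) := fun i =>
    univ.powerset.filter fun t => Finset.max t = i ∧ StrictAntiOn f ↑t
  have inc_i : ∀ i, {i} ∈ inc_sequences_ending_in i := fun i => by
    simp [inc_sequences_ending_in, StrictMonoOn]
  have dec_i : ∀ i, {i} ∈ dec_sequences_ending_in i := fun i => by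
    simp [dec_sequences_ending_in, StrictAntiOn]
  let ab' : Fin n → ℕ × ℕ := by
    intro i
    apply
      (max' ((inc_sequences_ending_in i).image card) (Nonempty.image ⟨{i}, inc_i i⟩ _),
        max' ((dec_sequences_ending_in i).image card) (Nonempty.image ⟨{i}, dec_i i⟩ _))
  generalize hab : ab' = ab
  rsuffices ⟨i, hi⟩ : ∃ i, r < (ab i).1 ∨ s < (ab i).2
  · refine Or.imp ?_ ?_ hi
    on_goal 1 =>
      have : (ab i).1 ∈ image card (inc_sequences_ending_in i) := by
        simp only [← hab]; exact max'_mem _ (Nonempty.image ⟨{i}, inc_i i⟩ _)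
    on_goal 2 =>
      have : (ab i).2 ∈ image card (dec_sequences_ending_in i) := by
        simp only [← hab]; exact max'_mem _ (Nonempty.image ⟨{i}, dec_i i⟩ _)
    all_goals
      intro hi
      rw [mem_image] at this
      obtain ⟨t, ht₁, ht₂⟩ := this
      refine ⟨t, by rwa [ht₂], ?_⟩
      rw [mem_filter] at ht₁
      apply ht₁.2.2
  have : Injective ab := by
    simp only [← hab]
    apply Injective.of_lt_imp_ne
    intro i j k q
    injection q with q₁ q₂
    cases lt_or_gt_of_ne fun _ => ne_of_lt ‹i < j› (hf ‹f i = f j›)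
    on_goal 1 =>
      apply ne_of_lt _ q₁
      have : (ab' i).1 ∈ image card (inc_sequences_ending_in i) := by dsimp only [ab']; exact max'_mem _ _
    on_goal 2 =>
      apply ne_of_lt _ q₂
      have : (ab' i).2 ∈ image card (dec_sequences_ending_in i) := by dsimp only [ab']; exact max'_mem _ _
    all_goals
      rw [Nat.lt_iff_add_one_le]
      apply le_max'
      rw [mem_image] at this ⊢
      rcases this with ⟨t, ht₁, ht₂⟩
      rw [mem_filter] at ht₁
      have : t.max = i := by simp only [ht₁.2.1]
      refine ⟨insert j t, ?_, ?_⟩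
      · rw [mem_filter]
        refine ⟨?_, ?_, ?_⟩
        · rw [mem_powerset]; apply subset_univ
        · convert max_insert (a := j) (s := t)
          rw [ht₁.2.1, max_eq_left]
          apply WithBot.coe_le_coe.mpr (le_of_lt ‹i < j›)
        simp only [StrictMonoOn, StrictAntiOn, coe_insert, Set.mem_insert_iff, mem_coe]
        rintro x ⟨rfl | _⟩ y ⟨rfl | _⟩ _
        · apply (irrefl _ ‹j < j›).elim
        · exfalso
          apply not_le_of_gt (_root_.trans ‹i < j› ‹j < y›) (le_max_of_eq ‹y ∈ t› ‹t.max = i›)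
        · first
          | apply lt_of_le_of_lt _ ‹f i < f j›
          | apply lt_of_lt_of_le ‹f j < f i› _
          rcases lt_or_eq_of_le (le_max_of_eq ‹x ∈ t› ‹t.max = i›) with (_ | rfl)
          · apply le_of_lt (ht₁.2.2 ‹x ∈ t› (mem_of_max ‹t.max = i›) ‹x < i›)
          · rfl
        · apply ht₁.2.2 ‹x ∈ t› ‹y ∈ t› ‹x < y›
      · rw [card_insert_of_notMem, ht₂]
        intro
        apply not_le_of_gt ‹i < j› (le_max_of_eq ‹j ∈ t› ‹t.max = i›)
  by_contra! q
  let ran : Finset (ℕ × ℕ) := (range r).image Nat.succ ×ˢ (range s).image Nat.succ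
  have : image ab univ ⊆ ran := by
    rintro ⟨x₁, x₂⟩
    simp only [ran, mem_image, exists_prop, mem_range, mem_univ, mem_product, true_and,
      Prod.ext_iff]
    rintro ⟨i, rfl, rfl⟩
    specialize q i
    have z : 1 ≤ (ab i).1 ∧ 1 ≤ (ab i).2 := by
      simp only [← hab]
      constructor <;>
        · apply le_max'
          rw [mem_image]
          exact ⟨{i}, by solve_by_elim, card_singleton i⟩
    exact ⟨⟨(ab i).1 - 1, by omega⟩, (ab i).2 - 1, by omega⟩
  apply not_le_of_gt hn
  simpa [ran, Nat.succ_injective, card_image_of_injective, ‹Injective ab›] using card_le_card this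

/-- Weak Erdős–Szekeres for possibly non-injective real sequences: if `(K-1)*(K-1) < n`,
there is a subset of size `≥ K` on which `f` is monotone or antitone. -/
theorem exists_monotone_subset {K n : ℕ} (hn : (K - 1) * (K - 1) < n) (f : Fin n → ℝ) :
    ∃ t : Finset (Fin n), K ≤ #t ∧ (MonotoneOn f ↑t ∨ AntitoneOn f ↑t) := by
  let g : Fin n → ℝ ×ₗ (Fin n) := fun i => toLex (f i, i)
  have hg : Injective g := fun a b hab => congrArg (fun p => (ofLex p).2) hab
  rcases erdos_szekeres (r := K - 1) (s := K - 1) hn hg with ⟨t, ht, hmono⟩ | ⟨t, ht, hanti⟩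
  · refine ⟨t, by omega, Or.inl ?_⟩
    intro x hx y hy hxy
    rcases eq_or_lt_of_le hxy with rfl | hlt
    · exact le_rfl
    · have := hmono hx hy hlt
      rcases Prod.Lex.lt_iff.1 this with h1 | h1
      · exact h1.le
      · exact h1.1.le
  · refine ⟨t, by omega, Or.inr ?_⟩
    intro x hx y hy hxy
    rcases eq_or_lt_of_le hxy with rfl | hlt
    · exact le_rfl
    · have := hanti hx hy hlt
      rcases Prod.Lex.lt_iff.1 this with h1 | h1
      · exact h1.le
      · exact h1.1.le

end Stmt18Aux

theorem stmt18 (m n : ℕ) (h : 3 ^ 2 ^ m ≤ n) (v : Fin n → Fin m → ℝ) :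
    ∃ i j k : Fin n, i < j ∧ j < k ∧
      ∀ l : Fin m, (v i l ≤ v j l ∧ v j l ≤ v k l) ∨ (v k l ≤ v j l ∧ v j l ≤ v i l) := by
  induction m generalizing n with
  | zero =>
    simp only [pow_zero, pow_one] at h
    exact ⟨⟨0, by omega⟩, ⟨1, by omega⟩, ⟨2, by omega⟩, by simp [Fin.lt_def], by simp [Fin.lt_def],
      fun l => l.elim0⟩
  | succ m ih =>
    set K := 3 ^ 2 ^ m with hK
    have hK1 : 1 ≤ K := Nat.one_le_pow _ _ (by norm_num)
    have hn : (K - 1) * (K - 1) < n := by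
      have h2 : 3 ^ 2 ^ (m + 1) = K * K := by
        rw [hK, pow_succ, pow_mul]; ring
      obtain ⟨c, hc⟩ := Nat.exists_eq_add_of_le hK1
      have hc' : K - 1 = c := by omega
      rw [hc']
      have hn' : K * K ≤ n := h2 ▸ h
      nlinarith
    obtain ⟨t, htK, hmono⟩ := Stmt18Aux.exists_monotone_subset hn (fun i => v i (Fin.last m))
    obtain ⟨t', ht'sub, ht'card⟩ := Finset.exists_subset_card_eq htK
    have e := t'.orderIsoOfFin ht'card
    obtain ⟨a, b, c, hab, hbc, habc⟩ := ih K le_rfl (fun x l => v (e x) l.castSucc)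
    have hemono : StrictMono fun x : Fin K => (e x : Fin n) := fun x y hxy => e.strictMono hxy
    refine ⟨e a, e b, e c, hemono hab, hemono hbc, fun l => ?_⟩
    refine Fin.lastCases ?_ (fun l' => habc l') l
    have hea : (e a : Fin n) ∈ t := ht'sub (e a).2
    have heb : (e b : Fin n) ∈ t := ht'sub (e b).2
    have hec : (e c : Fin n) ∈ t := ht'sub (e c).2
    rcases hmono with hm | hm
    · exact Or.inl ⟨hm hea heb (hemono hab).le, hm heb hec (hemono hbc).le⟩
    · exact Or.inr ⟨hm heb hec (hemono hbc).le, hm hea heb (hemono hab).le⟩
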